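/- Let (L, ∨, ∧, 0, 1) be a distributive lattice with bottom 0 and top 1, 0 ≠ 1. Define multivalued operations on L by x ⊕ y = {z ∈ L : z ≤ x ∨ y} and x ⊗ y = {z ∈ L : z ≥ x ∧ y}. Then a subset p ⊆ L is a proper prime ideal of (L, ⊕, ⊗) — i.e., 0 ∈ p, 1 ∉ p, x, y ∈ p implies x ⊕ y ⊆ p, and (x ⊗ y) ∩ p ≠ ∅ implies x ∈ p or y ∈ p — if and only if p is a prime ideal of the lattice L in the classical sense: a nonempty subset of L closed under ∨ and downward closed, with 1 ∉ p, such that a ∧ b ∈ p implies a ∈ p or b ∈ p. Moreover, the topology on this set of prime ideals generated by the subbase {U⁺ₐ : a ∈ L}, where U⁺ₐ = {p : a ∉ p}, coincides with the Stone topology, whose open sets are the sets U_I = {p : I ⊄ p} for lattice ideals I of L. -/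

import Mathlib

/-- The set of proper prime ideals of `(L, ⊕, ⊗)` where `x ⊕ y = {z : z ≤ x ∨ y}` and
`x ⊗ y = {z : z ≥ x ∧ y}`: subsets `p` with `0 ∈ p`, `1 ∉ p`, closed under `⊕` and prime
with respect to `⊗`. -/
def latProperPrimes (L : Type*) [DistribLattice L] [BoundedOrder L] : Set (Set L) :=
  {p | ⊥ ∈ p ∧ ⊤ ∉ p ∧
    (∀ x ∈ p, ∀ y ∈ p, {z : L | z ≤ x ⊔ y} ⊆ p) ∧
    (∀ x y : L, ({z : L | x ⊓ y ≤ z} ∩ p).Nonempty → x ∈ p ∨ y ∈ p)}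

/-- A prime ideal of a lattice `L` in the classical sense: a nonempty subset closed under
`∨` and downward closed, with `1 ∉ p`, such that `a ∧ b ∈ p` implies `a ∈ p` or `b ∈ p`. -/
def IsClassicalPrimeLatticeIdeal {L : Type*} [DistribLattice L] [BoundedOrder L]
    (p : Set L) : Prop :=
  p.Nonempty ∧ (∀ a ∈ p, ∀ b ∈ p, a ⊔ b ∈ p) ∧ (∀ a ∈ p, ∀ b : L, b ≤ a → b ∈ p) ∧
  (⊤ : L) ∉ p ∧ (∀ a b : L, a ⊓ b ∈ p → a ∈ p ∨ b ∈ p)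

/-- A lattice ideal of `L`: a nonempty subset closed under `∨` and downward closed. -/
def IsLatticeIdealSet {L : Type*} [DistribLattice L] [BoundedOrder L] (I : Set L) : Prop :=
  I.Nonempty ∧ (∀ a ∈ I, ∀ b ∈ I, a ⊔ b ∈ I) ∧ (∀ a ∈ I, ∀ b : L, b ≤ a → b ∈ I)

/-- For a bounded distributive lattice `L` with `0 ≠ 1`: a subset `p ⊆ L` is a proper
prime ideal of `(L, ⊕, ⊗)` iff it is a prime ideal of the lattice `L` in the classical
sense; moreover, the topology on the set of such `p` generated by the subbase
`{U⁺ₐ = {p : a ∉ p} : a ∈ L}` coincides with the Stone topology, whose open sets are the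
sets `U_I = {p : I ⊄ p}` for lattice ideals `I` of `L`. -/
theorem stmt11 {L : Type*} [DistribLattice L] [BoundedOrder L] (h01 : (⊥ : L) ≠ ⊤) :
    (∀ p : Set L, p ∈ latProperPrimes L ↔ IsClassicalPrimeLatticeIdeal p) ∧
    (∀ U : Set (latProperPrimes L),
      (TopologicalSpace.generateFrom
        {V : Set (latProperPrimes L) |
          ∃ a : L, V = {p : latProperPrimes L | a ∉ (p : Set L)}}).IsOpen U ↔
      ∃ I : Set L, IsLatticeIdealSet I ∧
        U = {p : latProperPrimes L | ¬ I ⊆ (p : Set L)}) := by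
  classical
  have hchar : ∀ p : Set L, p ∈ latProperPrimes L ↔ IsClassicalPrimeLatticeIdeal p := by
    intro p
    constructor
    · rintro ⟨h0, h1, hplus, hmul⟩
      refine ⟨⟨⊥, h0⟩, ?_, ?_, h1, ?_⟩
      · intro a ha b hb; exact hplus a ha b hb le_rfl
      · intro a ha b hba; exact hplus a ha a ha (le_trans hba le_sup_left)
      · intro a b hab; exact hmul a b ⟨a ⊓ b, le_rfl, hab⟩
    · rintro ⟨⟨c, hc⟩, hjoin, hdown, h1, hprime⟩
      refine ⟨hdown c hc ⊥ bot_le, h1, ?_, ?_⟩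
      · intro x hx y hy z hz; exact hdown _ (hjoin x hx y hy) z hz
      · rintro x y ⟨z, hz, hzp⟩
        exact hprime x y (hdown z hzp _ hz)
  refine ⟨hchar, ?_⟩
  have hdownP : ∀ p : latProperPrimes L, ∀ a ∈ (p : Set L), ∀ b : L, b ≤ a → b ∈ (p : Set L) :=
    fun p => ((hchar p).1 p.2).2.2.1
  have hjoinP : ∀ p : latProperPrimes L, ∀ a ∈ (p : Set L), ∀ b ∈ (p : Set L),
      a ⊔ b ∈ (p : Set L) := fun p => ((hchar p).1 p.2).2.1
  have htopP : ∀ p : latProperPrimes L, (⊤ : L) ∉ (p : Set L) :=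
    fun p => ((hchar p).1 p.2).2.2.2.1
  have hprimeP : ∀ p : latProperPrimes L, ∀ a b : L, a ⊓ b ∈ (p : Set L) →
      a ∈ (p : Set L) ∨ b ∈ (p : Set L) := fun p => ((hchar p).1 p.2).2.2.2.2
  have hbotP : ∀ p : latProperPrimes L, (⊥ : L) ∈ (p : Set L) := fun p => p.2.1
  have hsupP : ∀ p : latProperPrimes L, ∀ t : Finset L, (∀ y ∈ t, y ∈ (p : Set L)) →
      t.sup id ∈ (p : Set L) := by
    intro p t
    induction t using Finset.induction with
    | empty => intro _; simpa using hbotP p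
    | insert _ _ hx ih =>
      intro h
      rw [Finset.sup_insert]
      exact hjoinP p _ (h _ (Finset.mem_insert_self _ _))
        _ (ih fun y hy => h y (Finset.mem_insert_of_mem hy))
  intro U
  constructor
  · intro hU
    induction hU with
    | basic V hV =>
      obtain ⟨a, rfl⟩ := hV
      refine ⟨{b | b ≤ a}, ⟨⟨a, le_rfl⟩, fun x hx y hy => sup_le hx hy,
        fun x hx y hy => hy.trans hx⟩, ?_⟩
      ext p
      simp only [Set.mem_setOf_eq]
      constructor
      · intro ha hsub; exact ha (hsub le_rfl)
      · intro h
        by_contra hap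
        exact h fun b hb => hdownP p a hap b hb
    | univ =>
      refine ⟨Set.univ, ⟨⟨⊥, trivial⟩, fun _ _ _ _ => trivial, fun _ _ _ _ => trivial⟩, ?_⟩
      ext p
      simp only [Set.mem_univ, true_iff, Set.mem_setOf_eq]
      intro hsub
      exact htopP p (hsub (Set.mem_univ ⊤))
    | inter V W hV hW ihV ihW =>
      obtain ⟨I, ⟨⟨cI, hcI⟩, hIj, hId⟩, rfl⟩ := ihV
      obtain ⟨J, ⟨⟨cJ, hcJ⟩, hJj, hJd⟩, rfl⟩ := ihW
      refine ⟨I ∩ J, ⟨⟨⊥, hId cI hcI ⊥ bot_le, hJd cJ hcJ ⊥ bot_le⟩,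
        fun a ha b hb => ⟨hIj a ha.1 b hb.1, hJj a ha.2 b hb.2⟩,
        fun a ha b hb => ⟨hId a ha.1 b hb, hJd a ha.2 b hb⟩⟩, ?_⟩
      ext p
      simp only [Set.mem_inter_iff, Set.mem_setOf_eq]
      constructor
      · rintro ⟨hIp, hJp⟩
        obtain ⟨a, haI, hap⟩ := Set.not_subset.1 hIp
        obtain ⟨b, hbJ, hbp⟩ := Set.not_subset.1 hJp
        have hab : a ⊓ b ∈ I ∩ J :=
          ⟨hId a haI _ inf_le_left, hJd b hbJ _ inf_le_right⟩
        have habp : a ⊓ b ∉ (p : Set L) := fun h =>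
          (hprimeP p a b h).elim hap hbp
        exact Set.not_subset.2 ⟨a ⊓ b, hab, habp⟩
      · intro h
        obtain ⟨c, ⟨hcI', hcJ'⟩, hcp⟩ := Set.not_subset.1 h
        exact ⟨Set.not_subset.2 ⟨c, hcI', hcp⟩, Set.not_subset.2 ⟨c, hcJ', hcp⟩⟩
    | sUnion S hS ih =>
      choose f hf hUf using ih
      set I : Set L := {x | ∃ t : Finset L,
        (∀ y ∈ t, ∃ V, ∃ hV : V ∈ S, y ∈ f V hV) ∧ x ≤ t.sup id} with hIdef
      refine ⟨I, ⟨⟨⊥, ∅, by simp, by simp⟩, ?_, ?_⟩, ?_⟩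
      · rintro a ⟨ta, hta, hale⟩ b ⟨tb, htb, hble⟩
        refine ⟨ta ∪ tb, ?_, ?_⟩
        · intro y hy
          rcases Finset.mem_union.1 hy with h | h
          exacts [hta y h, htb y h]
        · exact sup_le (hale.trans (Finset.sup_mono Finset.subset_union_left))
            (hble.trans (Finset.sup_mono Finset.subset_union_right))
      · rintro a ⟨t, ht, hle⟩ b hba
        exact ⟨t, ht, hba.trans hle⟩
      · ext p
        simp only [Set.mem_sUnion, Set.mem_setOf_eq]
        constructor
        · rintro ⟨V, hV, hpV⟩
          have := hUf V hV
          rw [this] at hpV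
          obtain ⟨a, haf, hap⟩ := Set.not_subset.1 hpV
          exact Set.not_subset.2 ⟨a, ⟨{a}, fun y hy => by
            rw [Finset.mem_singleton] at hy
            exact ⟨V, hV, hy ▸ haf⟩, by simp⟩, hap⟩
        · intro h
          by_contra hns
          push_neg at hns
          apply h
          rintro x ⟨t, ht, hle⟩
          refine hdownP p (t.sup id) ?_ x hle
          refine hsupP p t fun y hy => ?_
          obtain ⟨V, hV, hyf⟩ := ht y hy
          have hpV : p ∉ V := hns V hV
          rw [hUf V hV] at hpV
          simp only [Set.mem_setOf_eq, not_not] at hpV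
          exact hpV hyf
  · rintro ⟨I, ⟨⟨c, hc⟩, hIj, hId⟩, rfl⟩
    have hEq : {p : latProperPrimes L | ¬ I ⊆ (p : Set L)} =
        ⋃₀ {V : Set (latProperPrimes L) |
          ∃ a ∈ I, V = {p : latProperPrimes L | a ∉ (p : Set L)}} := by
      ext p
      simp only [Set.mem_sUnion, Set.mem_setOf_eq]
      constructor
      · intro h
        obtain ⟨a, haI, hap⟩ := Set.not_subset.1 h
        exact ⟨_, ⟨a, haI, rfl⟩, hap⟩
      · rintro ⟨V, ⟨a, haI, rfl⟩, hap⟩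
        exact Set.not_subset.2 ⟨a, haI, hap⟩
    rw [hEq]
    exact TopologicalSpace.GenerateOpen.sUnion _ (by
      rintro V ⟨a, haI, rfl⟩
      exact TopologicalSpace.GenerateOpen.basic _ ⟨a, rfl⟩)
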